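/- arXiv:1707.02404 — 6 statements merged into one kernel-verified Lean document; each statement's English description precedes it below -/
import Mathlib

section
/- Let γ generate F_{q^3} over F_q and let T = { c(γ+a)/(γ+b) : a, b ∈ F_q, c ∈ F_q* }. Then the cardinality of T (as a set, without multiplicities) is (q-1)(q^2-q+1). -/
open Polynomial

private lemma my_ncard_prod {α β : Type*} (s : Set α) (t : Set β) :
    (s ×ˢ t).ncard = s.ncard * t.ncard := by
  rw [← Nat.card_coe_set_eq, ← Nat.card_coe_set_eq, ← Nat.card_coe_set_eq,
    Nat.card_congr (Equiv.Set.prod s t), Nat.card_prod]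

/-- The set `T = { c(γ+a)/(γ+b) : a, b ∈ F, c ∈ Fˣ }` in a cubic extension
`E` of `F` (with `|F| = q`) has exactly `(q-1)(q^2-q+1)` elements. -/
theorem card_T_cubic
    (q : ℕ) (F E : Type*) [Field F] [Field E] [Algebra F E]
    [Fintype F] [Fintype E]
    (hq : Fintype.card F = q)
    (hdeg : Module.finrank F E = 3)
    (γ : E) (hγ : Algebra.adjoin F {γ} = ⊤) :
    Set.ncard {x : E | ∃ a b c : F, c ≠ 0 ∧
        x = algebraMap F E c * (γ + algebraMap F E a) / (γ + algebraMap F E b)}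
      = (q - 1) * (q ^ 2 - q + 1) := by
  classical
  set f : F →+* E := algebraMap F E with hf
  have hfi : Function.Injective f := f.injective
  -- minimal polynomial has degree 3
  have hint : IsIntegral F γ := IsIntegral.of_finite F γ
  have hmin : (minpoly F γ).natDegree = 3 := by
    have h1 : (IntermediateField.adjoin F {γ}) = ⊤ := by
      apply IntermediateField.toSubalgebra_injective
      rw [IntermediateField.adjoin_simple_toSubalgebra_of_isAlgebraic hint.isAlgebraic, hγ]; rfl
    have h2 := IntermediateField.adjoin.finrank hint
    rw [h1] at h2
    rw [← h2, IntermediateField.finrank_top', hdeg]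
  -- linear independence of 1, γ, γ²
  have lin : ∀ x y z : F, f x + f y * γ + f z * γ ^ 2 = 0 → x = 0 ∧ y = 0 ∧ z = 0 := by
    intro x y z h
    set p : F[X] := C x + C y * X + C z * X ^ 2 with hp
    have haev : aeval γ p = 0 := by simpa [hp] using h
    have hpz : p = 0 := by
      by_contra hne
      have hle := minpoly.degree_le_of_ne_zero F γ hne haev
      have h3 : (minpoly F γ).degree = (3 : ℕ) := by
        rw [degree_eq_natDegree (minpoly.ne_zero hint), hmin]
      have h2 : p.degree ≤ (2 : ℕ) := by rw [hp]; compute_degree; norm_num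
      rw [h3] at hle
      have := le_trans hle h2
      norm_num at this
    refine ⟨?_, ?_, ?_⟩
    · have := congrArg (fun r => coeff r 0) hpz; simpa [hp] using this
    · have := congrArg (fun r => coeff r 1) hpz; simpa [hp, coeff_one] using this
    · have := congrArg (fun r => coeff r 2) hpz; simpa [hp] using this
  -- denominators are nonzero
  have hden : ∀ b : F, γ + f b ≠ 0 := by
    intro b h
    have : f b + f 1 * γ + f 0 * γ ^ 2 = 0 := by
      simp only [map_one, map_zero, one_mul, zero_mul, add_zero]
      rw [add_comm]; exact h
    exact one_ne_zero ((lin b 1 0 this).2.1)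
  -- the two pieces
  set A : Set E := f '' {c : F | c ≠ 0} with hA
  set ψ : (F × F) × F → E := fun p => f p.2 * (γ + f p.1.1) / (γ + f p.1.2) with hψ
  set P : Set ((F × F) × F) := {p : F × F | p.1 ≠ p.2} ×ˢ {c : F | c ≠ 0} with hP
  set B : Set E := ψ '' P with hB
  have hTAB : {x : E | ∃ a b c : F, c ≠ 0 ∧
      x = f c * (γ + f a) / (γ + f b)} = A ∪ B := by
    ext x
    constructor
    · rintro ⟨a, b, c, hc, rfl⟩
      by_cases hab : a = b
      · left
        refine ⟨c, hc, ?_⟩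
        subst hab
        rw [mul_div_assoc, div_self (hden a), mul_one]
      · right
        exact ⟨((a, b), c), ⟨hab, hc⟩, rfl⟩
    · rintro (⟨c, hc, rfl⟩ | ⟨⟨⟨a, b⟩, c⟩, ⟨hab, hc⟩, rfl⟩)
      · exact ⟨0, 0, c, hc, by rw [mul_div_assoc, div_self (hden 0), mul_one]⟩
      · exact ⟨a, b, c, hc, rfl⟩
  -- key: extracting F-coefficient equations from an E-equation
  have key : ∀ a b c a' b' c' : F,
      f c * (γ + f a) * (γ + f b') = f c' * (γ + f a') * (γ + f b) →
      c = c' ∧ c * a + c * b' = c' * a' + c' * b ∧ c * a * b' = c' * a' * b := by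
    intro a b c a' b' c' h
    have h0 : f (c * a * b' - c' * a' * b) + f (c * a + c * b' - (c' * a' + c' * b)) * γ
        + f (c - c') * γ ^ 2 = 0 := by
      simp only [map_sub, map_add, map_mul]
      linear_combination h
    obtain ⟨h1, h2, h3⟩ := lin _ _ _ h0
    exact ⟨sub_eq_zero.mp h3, sub_eq_zero.mp h2, sub_eq_zero.mp h1⟩
  -- disjointness
  have hdisj : Disjoint A B := by
    rw [Set.disjoint_left]
    rintro x ⟨c', hc', rfl⟩ ⟨⟨⟨a, b⟩, c⟩, ⟨hab, hc⟩, hx⟩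
    have hx' : f c * (γ + f a) / (γ + f b) = f c' := hx
    have hx'' : f c * (γ + f a) = f c' * (γ + f b) := (div_eq_iff (hden b)).mp hx'
    have hcross : f c * (γ + f a) * (γ + f b) = f c' * (γ + f b) * (γ + f b) := by
      linear_combination (γ + f b) * hx''
    obtain ⟨h1, h2, h3⟩ := key a b c b b c' hcross
    subst h1
    have : a = b := mul_left_cancel₀ hc (by linear_combination h2)
    exact hab this
  -- injectivity on P
  have hinj : Set.InjOn ψ P := by
    rintro ⟨⟨a, b⟩, c⟩ ⟨hab, hc⟩ ⟨⟨a', b'⟩, c'⟩ ⟨hab', hc'⟩ h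
    have h' : f c * (γ + f a) / (γ + f b) = f c' * (γ + f a') / (γ + f b') := h
    rw [div_eq_div_iff (hden b) (hden b')] at h'
    have hcross : f c * (γ + f a) * (γ + f b') = f c' * (γ + f a') * (γ + f b) := by
      linear_combination h'
    obtain ⟨h1, h2, h3⟩ := key a b c a' b' c' hcross
    subst h1
    have e1 : a + b' = a' + b := mul_left_cancel₀ hc (by linear_combination h2)
    have e2 : a * b' = a' * b := mul_left_cancel₀ hc (by linear_combination h3)
    have hbb : b = b' := by
      have h0 : (b' - b) * (a' - b') = 0 := by linear_combination e2 - b' * e1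
      rcases mul_eq_zero.mp h0 with h | h
      · exact (sub_eq_zero.mp h).symm
      · exact absurd (sub_eq_zero.mp h) hab'
    subst hbb
    have haa : a = a' := by linear_combination e1
    simp [haa]
  -- cardinalities
  have hcF : (Set.univ : Set F).ncard = q := by
    rw [Set.ncard_univ, Nat.card_eq_fintype_card, hq]
  have hcA : A.ncard = q - 1 := by
    rw [hA, Set.ncard_image_of_injective _ hfi]
    have : {c : F | c ≠ 0} = Set.univ \ {0} := by ext c; simp
    rw [this, Set.ncard_diff (by simp), hcF, Set.ncard_singleton]
  have hcB : B.ncard = (q * q - q) * (q - 1) := by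
    rw [hB, Set.ncard_image_of_injOn hinj, hP, my_ncard_prod]
    have hoff : {p : F × F | p.1 ≠ p.2}.ncard = q * q - q := by
      have h1 : {p : F × F | p.1 ≠ p.2} = Set.univ \ ((fun a => (a, a)) '' Set.univ) := by
        ext ⟨a, b⟩; simp [eq_comm]
      rw [h1, Set.ncard_diff (by simp),
        Set.ncard_image_of_injective _ (fun x y h => (Prod.mk.injEq _ _ _ _ ▸ h).1),
        Set.ncard_univ, Set.ncard_univ, Nat.card_eq_fintype_card, Nat.card_eq_fintype_card,
        Fintype.card_prod, hq]
    have hnz : {c : F | c ≠ 0}.ncard = q - 1 := by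
      have : {c : F | c ≠ 0} = Set.univ \ {0} := by ext c; simp
      rw [this, Set.ncard_diff (by simp), hcF, Set.ncard_singleton]
    rw [hoff, hnz]
  -- put it together
  rw [hTAB, Set.ncard_union_eq hdisj (Set.toFinite A) (Set.toFinite B), hcA, hcB]
  have hq2 : 2 ≤ q := by rw [← hq]; exact Fintype.one_lt_card
  have h1 : 1 ≤ q := by omega
  have h2 : q ≤ q * q := Nat.le_mul_of_pos_left q (by omega)
  have h3 : q ≤ q ^ 2 := by nlinarith
  zify [h1, h2, h3]
  ring
end

section
/- Let γ generate F_{q^3} over F_q and define U₁ = { u(γ+v) : u ∈ F_q*, v ∈ F_q } and U₋₁ = { 1/(u(γ+v)) : u ∈ F_q*, v ∈ F_q }. Then U₁ and U₋₁ are disjoint sets, each of cardinality q(q-1). -/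
/-- With `γ` generating the cubic extension `E` of `F` (`|F| = q`), the sets
`U₁ = { u(γ+v) : u ∈ Fˣ, v ∈ F }` and `U₋₁ = { (u(γ+v))⁻¹ }` are disjoint and
each has cardinality `q(q-1)`. -/
theorem U1_Uneg1_disjoint_card
    (q : ℕ) (F E : Type*) [Field F] [Field E] [Algebra F E]
    [Fintype F] [Fintype E]
    (hq : Fintype.card F = q)
    (hdeg : Module.finrank F E = 3)
    (γ : E) (hγ : Algebra.adjoin F {γ} = ⊤) :
    Disjoint {x : E | ∃ u v : F, u ≠ 0 ∧ x = algebraMap F E u * (γ + algebraMap F E v)}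
             {x : E | ∃ u v : F, u ≠ 0 ∧ x = (algebraMap F E u * (γ + algebraMap F E v))⁻¹} ∧
    Set.ncard {x : E | ∃ u v : F, u ≠ 0 ∧ x = algebraMap F E u * (γ + algebraMap F E v)}
      = q * (q - 1) ∧
    Set.ncard {x : E | ∃ u v : F, u ≠ 0 ∧ x = (algebraMap F E u * (γ + algebraMap F E v))⁻¹}
      = q * (q - 1) := by
  classical
  have hfd : FiniteDimensional F E := .of_finrank_pos (by rw [hdeg]; norm_num)
  have hint : IsIntegral F γ := .of_finite F γ
  have hadj : IntermediateField.adjoin F {γ} = ⊤ := by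
    apply IntermediateField.toSubalgebra_injective
    rw [IntermediateField.adjoin_simple_toSubalgebra_of_isAlgebraic hint.isAlgebraic, hγ]
    rfl
  have hmin : (minpoly F γ).natDegree = 3 := by
    rw [← IntermediateField.adjoin.finrank hint, hadj, IntermediateField.finrank_top', hdeg]
  -- linear independence of 1, γ, γ²
  have key : ∀ a b c : F,
      algebraMap F E a * γ ^ 2 + algebraMap F E b * γ + algebraMap F E c = 0 →
      a = 0 ∧ b = 0 ∧ c = 0 := by
    intro a b c h
    set p : Polynomial F := Polynomial.C a * Polynomial.X ^ 2 + Polynomial.C b * Polynomial.X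
      + Polynomial.C c with hp
    have hev : Polynomial.aeval γ p = 0 := by simp [hp, h]
    have hp0 : p = 0 := by
      by_contra hne
      have h1 : (minpoly F γ).degree ≤ p.degree := minpoly.degree_le_of_ne_zero F γ hne hev
      have h2 : (minpoly F γ).natDegree ≤ p.natDegree := Polynomial.natDegree_le_natDegree h1
      have h3 : p.natDegree ≤ 2 := by rw [hp]; compute_degree
      omega
    refine ⟨?_, ?_, ?_⟩
    · have := congrArg (fun r => Polynomial.coeff r 2) hp0
      simpa [hp] using this
    · have := congrArg (fun r => Polynomial.coeff r 1) hp0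
      simpa [hp] using this
    · have := congrArg (fun r => Polynomial.coeff r 0) hp0
      simpa [hp] using this
  have key1 : ∀ b c : F, algebraMap F E b * γ + algebraMap F E c = 0 → b = 0 ∧ c = 0 := by
    intro b c h
    have := key 0 b c (by simp [h])
    exact ⟨this.2.1, this.2.2⟩
  -- elements are nonzero
  have hnz : ∀ u v : F, u ≠ 0 → algebraMap F E u * (γ + algebraMap F E v) ≠ 0 := by
    intro u v hu h
    have : algebraMap F E u * γ + algebraMap F E (u * v) = 0 := by
      rw [map_mul]; ring_nf; ring_nf at h; linear_combination h
    exact hu (key1 u (u * v) this).1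
  -- disjointness
  have hdisj : Disjoint {x : E | ∃ u v : F, u ≠ 0 ∧ x = algebraMap F E u * (γ + algebraMap F E v)}
      {x : E | ∃ u v : F, u ≠ 0 ∧ x = (algebraMap F E u * (γ + algebraMap F E v))⁻¹} := by
    rw [Set.disjoint_left]
    rintro x ⟨u, v, hu, rfl⟩ ⟨u', v', hu', heq⟩
    have hnz' := hnz u' v' hu'
    have hmul : algebraMap F E u * (γ + algebraMap F E v)
        * (algebraMap F E u' * (γ + algebraMap F E v')) = 1 := by
      rw [heq, inv_mul_cancel₀ hnz']
    have : algebraMap F E (u * u') * γ ^ 2 + algebraMap F E (u * u' * (v + v')) * γ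
        + algebraMap F E (u * u' * (v * v') - 1) = 0 := by
      simp only [map_mul, map_add, map_sub, map_one]
      linear_combination hmul
    exact mul_ne_zero hu hu' (key _ _ _ this).1
  -- cardinality of U₁
  set f : F × F → E := fun p => algebraMap F E p.1 * (γ + algebraMap F E p.2) with hf
  have hinj : Set.InjOn f {p : F × F | p.1 ≠ 0} := by
    rintro ⟨u, v⟩ hu ⟨u', v'⟩ hu' heq
    simp only [hf] at heq
    have : algebraMap F E (u - u') * γ + algebraMap F E (u * v - u' * v') = 0 := by
      simp only [map_sub, map_mul]
      linear_combination heq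
    obtain ⟨h1, h2⟩ := key1 _ _ this
    have h1' : u = u' := sub_eq_zero.mp h1
    have h2' : v = v' := by
      have hu0 : u ≠ 0 := hu
      have : u * v = u * v' := by rw [sub_eq_zero] at h2; rw [h2, h1']
      exact mul_left_cancel₀ hu0 this
    simp [h1', h2']
  have hU1 : {x : E | ∃ u v : F, u ≠ 0 ∧ x = algebraMap F E u * (γ + algebraMap F E v)}
      = f '' {p : F × F | p.1 ≠ 0} := by
    ext x
    constructor
    · rintro ⟨u, v, hu, rfl⟩; exact ⟨(u, v), hu, rfl⟩
    · rintro ⟨⟨u, v⟩, hu, rfl⟩; exact ⟨u, v, hu, rfl⟩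
  have e : {p : F × F | p.1 ≠ 0} ≃ {u : F // u ≠ 0} × F :=
    { toFun := fun p => (⟨p.1.1, p.2⟩, p.1.2)
      invFun := fun x => ⟨(x.1.1, x.2), x.1.2⟩
      left_inv := fun p => rfl
      right_inv := fun x => rfl }
  have hS : Set.ncard {p : F × F | p.1 ≠ 0} = q * (q - 1) := by
    rw [← Nat.card_coe_set_eq, Nat.card_congr e, Nat.card_prod, Nat.card_eq_fintype_card,
      Nat.card_eq_fintype_card, Fintype.card_subtype_compl, Fintype.card_subtype_eq, hq,
      mul_comm]
  have hcard1 : Set.ncard {x : E | ∃ u v : F, u ≠ 0 ∧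
      x = algebraMap F E u * (γ + algebraMap F E v)} = q * (q - 1) := by
    rw [hU1, Set.ncard_image_of_injOn hinj, hS]
  refine ⟨hdisj, hcard1, ?_⟩
  have hU2 : {x : E | ∃ u v : F, u ≠ 0 ∧ x = (algebraMap F E u * (γ + algebraMap F E v))⁻¹}
      = Inv.inv '' {x : E | ∃ u v : F, u ≠ 0 ∧ x = algebraMap F E u * (γ + algebraMap F E v)} := by
    ext x
    constructor
    · rintro ⟨u, v, hu, rfl⟩
      exact ⟨_, ⟨u, v, hu, rfl⟩, rfl⟩
    · rintro ⟨y, ⟨u, v, hu, rfl⟩, rfl⟩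
      exact ⟨u, v, hu, rfl⟩
  rw [hU2, Set.ncard_image_of_injective _ inv_injective, hcard1]
end

section
/- Let γ generate F_{q^3} over F_q, let T = { c(γ+a)/(γ+b) : a, b ∈ F_q, c ∈ F_q* }, and let U be the complement of T in the nonzero elements of F_{q^3}. Then U = U₁ ∪ U₋₁ where U₁ = { u(γ+v) : u ∈ F_q*, v ∈ F_q } and U₋₁ is the set of inverses of elements of U₁; in particular |U| = 2q(q-1). -/
open Polynomial in
lemma indep3_aux {F E : Type*} [Field F] [Field E] [Algebra F E]
    (hdeg : Module.finrank F E = 3) (γ : E) (hγ : Algebra.adjoin F {γ} = ⊤)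
    (a b c : F) (h : algebraMap F E a + algebraMap F E b * γ + algebraMap F E c * γ ^ 2 = 0) :
    a = 0 ∧ b = 0 ∧ c = 0 := by
  have hfd : FiniteDimensional F E := Module.finite_of_finrank_pos (by rw [hdeg]; norm_num)
  have hint : IsIntegral F γ := IsIntegral.of_finite F γ
  have htop : IntermediateField.adjoin F {γ} = ⊤ :=
    IntermediateField.adjoin_eq_top_of_algebra F {γ} hγ
  have hdeg3 : (minpoly F γ).natDegree = 3 := by
    rw [← IntermediateField.adjoin.finrank hint, htop, IntermediateField.finrank_top', hdeg]
  by_contra hne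
  set p : F[X] := C c * X ^ 2 + C b * X + C a with hp
  have hpz : p ≠ 0 := by
    intro h0
    apply hne
    refine ⟨?_, ?_, ?_⟩
    · have := congrArg (fun q => Polynomial.coeff q 0) h0
      simpa [hp, coeff_add, coeff_C, coeff_X] using this
    · have := congrArg (fun q => Polynomial.coeff q 1) h0
      simpa [hp, coeff_add, coeff_C, coeff_X] using this
    · have := congrArg (fun q => Polynomial.coeff q 2) h0
      simpa [hp, coeff_add, coeff_C, coeff_X] using this
  have haev : Polynomial.aeval γ p = 0 := by
    simp only [hp, map_add, map_mul, map_pow, aeval_C, aeval_X]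
    rw [← h]; ring
  have hle := minpoly.degree_le_of_ne_zero F γ hpz haev
  rw [Polynomial.degree_eq_natDegree (minpoly.ne_zero hint), hdeg3] at hle
  have h2 : p.degree ≤ 2 := degree_quadratic_le
  have := hle.trans h2
  norm_num at this

/-- The complement `U` of `T = { c(γ+a)/(γ+b) }` in the nonzero elements of the
cubic extension `E` of `F` is `U₁ ∪ U₋₁`, where `U₁ = { u(γ+v) : u ≠ 0 }` and
`U₋₁` is the set of inverses of elements of `U₁`; in particular
`|U| = 2q(q-1)`. -/
theorem complement_of_T
    (q : ℕ) (F E : Type*) [Field F] [Field E] [Algebra F E]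
    [Fintype F] [Fintype E]
    (hq : Fintype.card F = q)
    (hdeg : Module.finrank F E = 3)
    (γ : E) (hγ : Algebra.adjoin F {γ} = ⊤) :
    {x : E | x ≠ 0} \
        {x : E | ∃ a b c : F, c ≠ 0 ∧
          x = algebraMap F E c * (γ + algebraMap F E a) / (γ + algebraMap F E b)}
      = {x : E | ∃ u v : F, u ≠ 0 ∧ x = algebraMap F E u * (γ + algebraMap F E v)} ∪
        {x : E | ∃ u v : F, u ≠ 0 ∧ x = (algebraMap F E u * (γ + algebraMap F E v))⁻¹} ∧
    Set.ncard ({x : E | x ≠ 0} \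
        {x : E | ∃ a b c : F, c ≠ 0 ∧
          x = algebraMap F E c * (γ + algebraMap F E a) / (γ + algebraMap F E b)})
      = 2 * q * (q - 1) := by
  set A := algebraMap F E with hA
  have hAinj : Function.Injective A := (algebraMap F E).injective
  have key : ∀ a b c : F, A a + A b * γ + A c * γ ^ 2 = 0 → a = 0 ∧ b = 0 ∧ c = 0 :=
    fun a b c h => indep3_aux hdeg γ hγ a b c h
  have hAne : ∀ u : F, u ≠ 0 → A u ≠ 0 := by
    intro u hu h0
    exact hu (hAinj (by simpa using h0))
  have hγv : ∀ v : F, γ + A v ≠ 0 := by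
    intro v h0
    have := key v 1 0 (by rw [← h0]; simp [add_comm])
    simpa using this.2.1
  have hfd : FiniteDimensional F E := Module.finite_of_finrank_pos (by rw [hdeg]; norm_num)
  -- basis 1, γ, γ²
  have hli : LinearIndependent F ![1, γ, γ ^ 2] := by
    rw [Fintype.linearIndependent_iff]
    intro g hg i
    have hsum : A (g 0) + A (g 1) * γ + A (g 2) * γ ^ 2 = 0 := by
      rw [← hg, Fin.sum_univ_three]
      simp [Algebra.smul_def, hA]
    have h3 := key _ _ _ hsum
    fin_cases i
    · exact h3.1
    · exact h3.2.1
    · exact h3.2.2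
  let bE : Module.Basis (Fin 3) F E :=
    basisOfLinearIndependentOfCardEqFinrank hli (by simp [hdeg])
  have hbE : ∀ i, bE i = ![1, γ, γ ^ 2] i := by
    intro i
    rw [show ⇑bE = ![1, γ, γ ^ 2] from coe_basisOfLinearIndependentOfCardEqFinrank hli _]
  have hrepr : ∀ x : E, x = A (bE.repr x 0) + A (bE.repr x 1) * γ + A (bE.repr x 2) * γ ^ 2 := by
    intro x
    conv_lhs => rw [← bE.sum_repr x]
    rw [Fin.sum_univ_three, hbE 0, hbE 1, hbE 2]
    simp [Algebra.smul_def, hA]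
  -- γ^3 in the basis
  obtain ⟨p0, p1, p2, hγ3⟩ : ∃ p0 p1 p2 : F, γ ^ 3 = A p0 + A p1 * γ + A p2 * γ ^ 2 :=
    ⟨_, _, _, hrepr (γ ^ 3)⟩
  -- the set equality
  have hset : {x : E | x ≠ 0} \
        {x : E | ∃ a b c : F, c ≠ 0 ∧
          x = A c * (γ + A a) / (γ + A b)}
      = {x : E | ∃ u v : F, u ≠ 0 ∧ x = A u * (γ + A v)} ∪
        {x : E | ∃ u v : F, u ≠ 0 ∧ x = (A u * (γ + A v))⁻¹} := by
    ext x
    simp only [Set.mem_diff, Set.mem_setOf_eq, Set.mem_union]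
    constructor
    · rintro ⟨hx0, hxT⟩
      set x0 := bE.repr x 0 with hx0d
      set x1 := bE.repr x 1 with hx1d
      set x2 := bE.repr x 2 with hx2d
      have hx : x = A x0 + A x1 * γ + A x2 * γ ^ 2 := hrepr x
      by_cases h2 : x2 = 0
      · by_cases h1 : x1 = 0
        · -- x = A x0, x ∈ T: contradiction
          exfalso
          have hx00 : x0 ≠ 0 := by
            intro h0
            rw [h0, h1, h2] at hx
            simp at hx
            exact hx0 hx
          exact hxT ⟨0, 0, x0, hx00, by
            rw [mul_div_assoc, div_self (hγv 0), mul_one, hx, h1, h2]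
            simp⟩
        · -- x ∈ U₁
          left
          refine ⟨x1, x0 / x1, h1, ?_⟩
          rw [hx, h2, map_zero, zero_mul, add_zero, mul_add, ← map_mul,
            mul_div_cancel₀ _ h1]
          ring
      · -- x2 ≠ 0
        set b := -(x1 + x2 * p2) / x2 with hbd
        have hb : b * x2 = -(x1 + x2 * p2) := by
          rw [hbd, div_mul_cancel₀ _ h2]
        set α := x2 * p0 + b * x0 with hαd
        set β := x0 + x2 * p1 + b * x1 with hβd
        have heq : x * (γ + A b) = A α + A β * γ := by
          have hz : x1 + b * x2 + x2 * p2 = 0 := by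
            linear_combination hb
          have expand : x * (γ + A b)
              = A α + A β * γ + A (x1 + b * x2 + x2 * p2) * γ ^ 2
                + A x2 * (γ ^ 3 - (A p0 + A p1 * γ + A p2 * γ ^ 2)) := by
            rw [hx, hαd, hβd]
            simp only [map_add, map_mul, map_neg, map_sub]
            ring
          rw [expand, hz, ← hγ3]
          simp
        by_cases hβ : β = 0
        · -- x ∈ U₋₁
          right
          rw [hβ] at heq
          simp only [map_zero, zero_mul, add_zero] at heq
          have hα : α ≠ 0 := by
            intro h0
            rw [h0, map_zero] at heq
            rcases mul_eq_zero.mp heq with h | h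
            · exact hx0 h
            · exact hγv b h
          refine ⟨α⁻¹, b, inv_ne_zero hα, ?_⟩
          rw [map_inv₀, mul_inv, inv_inv, ← div_eq_mul_inv, eq_div_iff (hγv b)]
          exact heq
        · -- x ∈ T: contradiction
          exfalso
          exact hxT ⟨α / β, b, β, hβ, by
            rw [eq_div_iff (hγv b), heq]
            rw [mul_add, ← map_mul, mul_div_cancel₀ _ hβ]
            ring⟩
    · rintro (⟨u, v, hu, hx⟩ | ⟨u, v, hu, hx⟩)
      · constructor
        · rw [hx]
          exact mul_ne_zero (hAne u hu) (hγv v)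
        · rintro ⟨a, b, c, hc, hT⟩
          rw [hx] at hT
          rw [eq_div_iff (hγv b)] at hT
          have h0 : A (u * v * b - c * a) + A (u * v + u * b - c) * γ + A u * γ ^ 2 = 0 := by
            simp only [map_sub, map_add, map_mul]
            linear_combination hT
          exact hu (key _ _ _ h0).2.2
      · have hne : A u * (γ + A v) ≠ 0 := mul_ne_zero (hAne u hu) (hγv v)
        constructor
        · rw [hx]
          exact inv_ne_zero hne
        · rintro ⟨a, b, c, hc, hT⟩
          rw [hx] at hT
          rw [eq_div_iff (hγv b)] at hT
          have hT' : γ + A b = A c * (γ + A a) * (A u * (γ + A v)) := by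
            have h1 : (A u * (γ + A v))⁻¹ * (γ + A b) * (A u * (γ + A v))
                = A c * (γ + A a) * (A u * (γ + A v)) := by rw [hT]
            rwa [mul_comm ((A u * (γ + A v))⁻¹) _, mul_assoc, inv_mul_cancel₀ hne,
              mul_one] at h1
          have h0 : A (c * a * u * v - b) + A (c * u * a + c * u * v - 1) * γ
              + A (c * u) * γ ^ 2 = 0 := by
            simp only [map_sub, map_add, map_mul, map_one]
            linear_combination -hT'
          have := (key _ _ _ h0).2.2
          exact hc (by rcases mul_eq_zero.mp this with h | h; exact h; exact absurd h hu)
  refine ⟨hset, ?_⟩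
  classical
  rw [hset]
  -- disjointness
  have hdisj : Disjoint {x : E | ∃ u v : F, u ≠ 0 ∧ x = A u * (γ + A v)}
      {x : E | ∃ u v : F, u ≠ 0 ∧ x = (A u * (γ + A v))⁻¹} := by
    rw [Set.disjoint_left]
    rintro x ⟨u, v, hu, hx⟩ ⟨u', v', hu', hx'⟩
    have hne' : A u' * (γ + A v') ≠ 0 := mul_ne_zero (hAne u' hu') (hγv v')
    have h1 : A u * (γ + A v) * (A u' * (γ + A v')) = 1 := by
      rw [hx.symm.trans hx']
      exact inv_mul_cancel₀ hne'
    have h0 : A (u * u' * v * v' - 1) + A (u * u' * v + u * u' * v') * γ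
        + A (u * u') * γ ^ 2 = 0 := by
      simp only [map_sub, map_add, map_mul, map_one]
      linear_combination h1
    have := (key _ _ _ h0).2.2
    rcases mul_eq_zero.mp this with h | h
    · exact hu h
    · exact hu' h
  -- U₁ as an image
  have hU1 : {x : E | ∃ u v : F, u ≠ 0 ∧ x = A u * (γ + A v)}
      = (fun p : F × F => A p.1 * (γ + A p.2)) '' {p : F × F | p.1 ≠ 0} := by
    ext x
    constructor
    · rintro ⟨u, v, hu, hx⟩
      exact ⟨(u, v), hu, hx.symm⟩
    · rintro ⟨⟨u, v⟩, hu, hx⟩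
      exact ⟨u, v, hu, hx.symm⟩
  have hinj : Set.InjOn (fun p : F × F => A p.1 * (γ + A p.2)) {p : F × F | p.1 ≠ 0} := by
    rintro ⟨u, v⟩ hu ⟨u', v'⟩ hu' h
    simp only [Set.mem_setOf_eq] at hu hu'
    simp only at h
    have h0 : A (u * v - u' * v') + A (u - u') * γ + A 0 * γ ^ 2 = 0 := by
      simp only [map_sub, map_add, map_mul, map_zero]
      linear_combination h
    obtain ⟨e1, e2, -⟩ := key _ _ _ h0
    have huu : u = u' := sub_eq_zero.mp e2
    have hvv : v = v' := by
      rw [sub_eq_zero, huu] at e1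
      exact mul_left_cancel₀ hu' e1
    simp [huu, hvv]
  have hsF : ({u : F | u ≠ 0}).ncard = q - 1 := by
    have he : {u : F | u ≠ 0} = ({0} : Set F)ᶜ := by ext; simp
    rw [he, Set.ncard_eq_toFinset_card']
    simp [Finset.card_compl, hq]
  have hprod : ({p : F × F | p.1 ≠ 0}).ncard = (q - 1) * q := by
    have he : {p : F × F | p.1 ≠ 0} = {u : F | u ≠ 0} ×ˢ (Set.univ : Set F) := by
      ext p; simp
    rw [he, Set.ncard_eq_toFinset_card']
    rw [Set.toFinset_prod, Finset.card_product]
    rw [← Set.ncard_eq_toFinset_card' {u : F | u ≠ 0}, hsF]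
    simp [hq]
  have hU1card : ({x : E | ∃ u v : F, u ≠ 0 ∧ x = A u * (γ + A v)}).ncard = (q - 1) * q := by
    rw [hU1, Set.ncard_image_of_injOn hinj, hprod]
  have hU2 : {x : E | ∃ u v : F, u ≠ 0 ∧ x = (A u * (γ + A v))⁻¹}
      = Inv.inv '' {x : E | ∃ u v : F, u ≠ 0 ∧ x = A u * (γ + A v)} := by
    ext x
    constructor
    · rintro ⟨u, v, hu, hx⟩
      exact ⟨A u * (γ + A v), ⟨u, v, hu, rfl⟩, hx.symm⟩
    · rintro ⟨y, ⟨u, v, hu, hy⟩, hxy⟩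
      exact ⟨u, v, hu, by rw [← hxy, hy]⟩
  have hU2card : ({x : E | ∃ u v : F, u ≠ 0 ∧ x = (A u * (γ + A v))⁻¹}).ncard = (q - 1) * q := by
    rw [hU2, Set.ncard_image_of_injective _ inv_injective, hU1card]
  rw [Set.ncard_union_eq hdisj (Set.toFinite _) (Set.toFinite _), hU1card, hU2card]
  generalize q - 1 = k
  ring
end

section
/- Let q be a prime power, γ a generator of F_{q^3} over F_q, and χ a nontrivial multiplicative character of F_{q^3} whose order divides q^2+q+1. Set S = Σ_{a ∈ F_q} χ(γ + a). Then |S|² = q - 1 - S - conj(S). -/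
open Finset

lemma chi_conj_aux {E : Type*} [Field E] [Fintype E] (χ : MulChar E ℂ) (x : E) :
    (starRingEnd ℂ) (χ x) = χ x⁻¹ := by
  have h1 : (starRingEnd ℂ) (χ x) = star (χ x) := rfl
  rw [h1, MulChar.star_apply', MulChar.inv_apply']

lemma chi_triv_aux {q : ℕ} {F E : Type*} [Field F] [Field E] [Algebra F E]
    [Fintype F] [Fintype E]
    (hq : Fintype.card F = q) (hcardE : Fintype.card E = q ^ 3)
    (χ : MulChar E ℂ) (hχ : χ ^ (q ^ 2 + q + 1) = 1)
    {c : F} (hc : c ≠ 0) : χ (algebraMap F E c) = 1 := by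
  haveI : DecidableEq E := Classical.decEq E
  have hq2 : 2 ≤ q := by
    rw [← hq]; exact Fintype.one_lt_card
  have hfact : q ^ 3 - 1 = (q - 1) * (q ^ 2 + q + 1) := by
    obtain ⟨k, rfl⟩ : ∃ k, q = k + 2 := ⟨q - 2, by omega⟩
    have h1 : k + 2 - 1 = k + 1 := rfl
    rw [h1]
    exact Nat.sub_eq_of_eq_add (by ring)
  have hcard : Fintype.card Eˣ = q ^ 3 - 1 := by
    rw [Fintype.card_units, hcardE]
  obtain ⟨g, hg⟩ := IsCyclic.exists_generator (α := Eˣ)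
  have hog : orderOf g = q ^ 3 - 1 := by
    rw [orderOf_eq_card_of_forall_mem_zpowers hg, Nat.card_eq_fintype_card, hcard]
  have hc' : algebraMap F E c ≠ 0 := by simpa using hc
  obtain ⟨z, hz⟩ := hg (Units.mk0 _ hc')
  have hz' : g ^ z = Units.mk0 _ hc' := hz
  have hpow' : (algebraMap F E c) ^ (q - 1) = 1 := by
    rw [← map_pow]
    have : c ^ (q - 1) = 1 := by
      rw [← hq]; exact FiniteField.pow_card_sub_one_eq_one c hc
    rw [this, map_one]
  have hpow : (Units.mk0 _ hc') ^ (q - 1) = 1 :=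
    Units.ext (by rw [Units.val_pow_eq_pow_val]; simpa using hpow')
  have hdvd : ((q ^ 3 - 1 : ℕ) : ℤ) ∣ z * ((q - 1 : ℕ) : ℤ) := by
    rw [← hog, orderOf_dvd_iff_zpow_eq_one, zpow_mul, hz', zpow_natCast, hpow]
  rw [hfact, Nat.cast_mul] at hdvd
  obtain ⟨w, hw⟩ := hdvd
  have hne : ((q - 1 : ℕ) : ℤ) ≠ 0 := by
    simp only [ne_eq, Nat.cast_eq_zero]; omega
  have hzw : z = ((q ^ 2 + q + 1 : ℕ) : ℤ) * w :=
    mul_right_cancel₀ hne (by linear_combination hw)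
  have hmk : Units.mk0 _ hc' = (g ^ w) ^ (q ^ 2 + q + 1) := by
    rw [← zpow_natCast (g ^ w), ← zpow_mul, mul_comm, ← hzw, hz']
  have hval : algebraMap F E c = ((g ^ w : Eˣ) : E) ^ (q ^ 2 + q + 1) := by
    have := congrArg Units.val hmk
    simpa [Units.val_pow_eq_pow_val] using this
  rw [hval, map_pow, ← MulChar.pow_apply' χ (by positivity) _, hχ]
  exact MulChar.one_apply (g ^ w).isUnit

open Finset in
/-- For `γ` generating the cubic extension `E` of `F` (`|F| = q`) and `χ` a
nontrivial multiplicative character of `E` whose order divides `q² + q + 1`,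
the sum `S = Σ_{a ∈ F} χ(γ + a)` satisfies `|S|² = q - 1 - S - conj S`. -/
theorem S_norm_sq_identity
    (q : ℕ) (F E : Type*) [Field F] [Field E] [Algebra F E]
    [Fintype F] [Fintype E]
    (hq : Fintype.card F = q)
    (hdeg : Module.finrank F E = 3)
    (γ : E) (hγ : Algebra.adjoin F {γ} = ⊤)
    (χ : MulChar E ℂ) (hχ₁ : χ ≠ 1) (hχ : χ ^ (q ^ 2 + q + 1) = 1) :
    (∑ a : F, χ (γ + algebraMap F E a)) *
        (starRingEnd ℂ) (∑ a : F, χ (γ + algebraMap F E a))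
      = (q : ℂ) - 1 - (∑ a : F, χ (γ + algebraMap F E a))
          - (starRingEnd ℂ) (∑ a : F, χ (γ + algebraMap F E a)) := by
  classical
  haveI : FiniteDimensional F E := FiniteDimensional.of_finrank_eq_succ hdeg
  have hγint : IsIntegral F γ := IsIntegral.of_finite F γ
  set ι : F →+* E := (algebraMap F E : F →+* E) with hι
  have hιdef : ∀ c : F, ι c = algebraMap F E c := fun _ => rfl
  -- power basis
  let pb0 := Algebra.adjoin.powerBasis hγint
  let e : Algebra.adjoin F {γ} ≃ₐ[F] E :=
    (Subalgebra.equivOfEq _ ⊤ hγ).trans Subalgebra.topEquiv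
  let pb := pb0.map e
  have hgen : pb.gen = γ := by simp [pb, pb0, e, Algebra.adjoin.powerBasis]
  have hdim : pb.dim = 3 := by
    have h := pb.finrank
    rw [hdeg] at h; omega
  let b3 : Module.Basis (Fin 3) F E := pb.basis.reindex (finCongr hdim)
  have hb3 : ∀ i : Fin 3, b3 i = γ ^ (i : ℕ) := by
    intro i
    rw [Module.Basis.reindex_apply, pb.basis_eq_pow, hgen]
    congr 1
  have hcardE : Fintype.card E = q ^ 3 := by
    rw [Module.card_fintype b3, hq]; simp
  have hq2 : 2 ≤ q := by rw [← hq]; exact Fintype.one_lt_card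
  -- linear independence and coordinates
  have lin_indep : ∀ c₀ c₁ c₂ : F, ι c₀ + ι c₁ * γ + ι c₂ * γ ^ 2 = 0 →
      c₀ = 0 ∧ c₁ = 0 ∧ c₂ = 0 := by
    intro c₀ c₁ c₂ hcc
    have hli := b3.linearIndependent
    rw [Fintype.linearIndependent_iff] at hli
    have h0 := hli ![c₀, c₁, c₂] ?_
    · exact ⟨h0 0, h0 1, h0 2⟩
    · rw [Fin.sum_univ_three]
      simp only [Matrix.cons_val_zero, Matrix.cons_val_one, Matrix.head_cons,
        Matrix.cons_val_two, Matrix.tail_cons, hb3]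
      rw [Algebra.smul_def, Algebra.smul_def, Algebra.smul_def]
      simpa using hcc
  have coords : ∀ x : E, x = ι (b3.repr x 0) + ι (b3.repr x 1) * γ + ι (b3.repr x 2) * γ ^ 2 := by
    intro x
    conv_lhs => rw [← b3.sum_repr x, Fin.sum_univ_three, hb3 0, hb3 1, hb3 2]
    simp [Algebra.smul_def, hιdef]
  -- basic facts
  have htriv : ∀ c : F, c ≠ 0 → χ (ι c) = 1 := fun c hc => chi_triv_aux hq hcardE χ hχ hc
  have hγF : ∀ b : F, γ + ι b ≠ 0 := by
    intro b hcontra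
    have h0 : ι b + ι 1 * γ + ι 0 * γ ^ 2 = 0 := by
      rw [map_one, map_zero, one_mul, zero_mul, add_zero, add_comm]
      exact hcontra
    exact one_ne_zero (lin_indep b 1 0 h0).2.1
  have sum_affine : ∀ (m c : F), m ≠ 0 → ∀ f : F → ℂ,
      ∑ u : F, f (u * m⁻¹ + c) = ∑ t : F, f t := by
    intro m c hm f
    refine Fintype.sum_bijective (fun u : F => u * m⁻¹ + c) ?_ _ _ (fun x => rfl)
    rw [Fintype.bijective_iff_injective_and_card]
    refine ⟨fun x y hxy => ?_, rfl⟩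
    simp only at hxy
    exact mul_right_cancel₀ (inv_ne_zero hm) (add_right_cancel hxy)
  have hq1C : ((q : ℂ) - 1) ≠ 0 := by
    intro h
    have h' : ((q:ℕ):ℂ) = ((1:ℕ):ℂ) := by rw [Nat.cast_one]; exact sub_eq_zero.mp h
    have := Nat.cast_inj (R := ℂ) |>.mp h'
    omega
  set S : ℂ := ∑ a : F, χ (γ + algebraMap F E a) with hS
  set Q : ℂ := ∑ p : F, ∑ t : F, χ (ι t + ι p * γ + γ ^ 2) with hQ
  -- Step 1 : Q = -1 - S
  have hQS : Q = -1 - S := by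
    have htot : ∑ x : E, χ x = 0 := MulChar.sum_eq_zero_of_ne_one hχ₁
    have hPsi : Function.Bijective
        (fun c : F × F × F => ι c.2.2 + ι c.2.1 * γ + ι c.1 * γ ^ 2) := by
      constructor
      · rintro ⟨a2, a1, a0⟩ ⟨b2, b1, b0⟩ h
        simp only at h
        have h0 : ι (a0 - b0) + ι (a1 - b1) * γ + ι (a2 - b2) * γ ^ 2 = 0 := by
          rw [map_sub, map_sub, map_sub]; linear_combination h
        obtain ⟨e0, e1, e2⟩ := lin_indep _ _ _ h0
        have g0 : a0 = b0 := sub_eq_zero.mp e0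
        have g1 : a1 = b1 := sub_eq_zero.mp e1
        have g2 : a2 = b2 := sub_eq_zero.mp e2
        simp [g0, g1, g2]
      · intro x
        exact ⟨⟨b3.repr x 2, b3.repr x 1, b3.repr x 0⟩, (coords x).symm⟩
    have h1 : ∑ c₂ : F, ∑ c₁ : F, ∑ c₀ : F, χ (ι c₀ + ι c₁ * γ + ι c₂ * γ ^ 2) = 0 := by
      have hb := Fintype.sum_bijective _ hPsi
        (fun c : F × F × F => χ (ι c.2.2 + ι c.2.1 * γ + ι c.1 * γ ^ 2)) (fun x => χ x)
        (fun x => rfl)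
      simp only [Fintype.sum_prod_type] at hb
      rw [htot] at hb
      exact hb
    -- c₂ ≠ 0 inner sums equal Q
    have hinner : ∀ c₂ : F, c₂ ≠ 0 →
        ∑ c₁ : F, ∑ c₀ : F, χ (ι c₀ + ι c₁ * γ + ι c₂ * γ ^ 2) = Q := by
      intro c₂ hc2
      have hpt : ∀ c₁ c₀ : F, χ (ι c₀ + ι c₁ * γ + ι c₂ * γ ^ 2)
          = χ (ι (c₀ * c₂⁻¹ + 0) + ι (c₁ * c₂⁻¹ + 0) * γ + γ ^ 2) := by
        intro c₁ c₀
        have hfac : ι c₀ + ι c₁ * γ + ι c₂ * γ ^ 2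
            = ι c₂ * (ι (c₀ * c₂⁻¹ + 0) + ι (c₁ * c₂⁻¹ + 0) * γ + γ ^ 2) := by
          have e1 : ι c₂ * ι (c₀ * c₂⁻¹ + 0) = ι c₀ := by
            rw [← map_mul]; congr 1; field_simp; ring
          have e2 : ι c₂ * ι (c₁ * c₂⁻¹ + 0) = ι c₁ := by
            rw [← map_mul]; congr 1; field_simp; ring
          linear_combination -e1 - γ * e2
        rw [hfac, map_mul, htriv c₂ hc2, one_mul]
      calc ∑ c₁ : F, ∑ c₀ : F, χ (ι c₀ + ι c₁ * γ + ι c₂ * γ ^ 2)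
          = ∑ c₁ : F, ∑ t : F, χ (ι t + ι (c₁ * c₂⁻¹ + 0) * γ + γ ^ 2) := by
            refine Finset.sum_congr rfl fun c₁ _ => ?_
            rw [Finset.sum_congr rfl fun c₀ _ => hpt c₁ c₀]
            exact sum_affine c₂ 0 hc2 (fun t => χ (ι t + ι (c₁ * c₂⁻¹ + 0) * γ + γ ^ 2))
        _ = Q := by
            rw [hQ]
            exact sum_affine c₂ 0 hc2 (fun p => ∑ t : F, χ (ι t + ι p * γ + γ ^ 2))
    -- c₂ = 0 part
    have hzero2 : ∑ c₁ : F, ∑ c₀ : F, χ (ι c₀ + ι c₁ * γ + ι (0:F) * γ ^ 2)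
        = ((q : ℂ) - 1) + ((q : ℂ) - 1) * S := by
      have hS1 : ∀ c₁ : F, c₁ ≠ 0 → ∑ c₀ : F, χ (ι c₀ + ι c₁ * γ + ι (0:F) * γ ^ 2) = S := by
        intro c₁ hc1
        have hpt : ∀ c₀ : F, χ (ι c₀ + ι c₁ * γ + ι (0:F) * γ ^ 2)
            = χ (γ + ι (c₀ * c₁⁻¹ + 0)) := by
          intro c₀
          have hfac : ι c₀ + ι c₁ * γ + ι (0:F) * γ ^ 2 = ι c₁ * (γ + ι (c₀ * c₁⁻¹ + 0)) := by
            rw [map_zero, zero_mul, add_zero]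
            have e1 : ι c₁ * ι (c₀ * c₁⁻¹ + 0) = ι c₀ := by
              rw [← map_mul]; congr 1; field_simp; ring
            linear_combination -e1
          rw [hfac, map_mul, htriv c₁ hc1, one_mul]
        rw [Finset.sum_congr rfl fun c₀ _ => hpt c₀]
        rw [hS]
        exact sum_affine c₁ 0 hc1 (fun a => χ (γ + ι a))
      have hsum0 : ∑ c₀ : F, χ (ι c₀ + ι (0:F) * γ + ι (0:F) * γ ^ 2) = (q : ℂ) - 1 := by
        have hpt : ∀ c₀ : F, χ (ι c₀ + ι (0:F) * γ + ι (0:F) * γ ^ 2) = χ (ι c₀) := by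
          intro c₀; rw [map_zero, zero_mul, zero_mul, add_zero, add_zero]
        rw [Finset.sum_congr rfl fun c₀ _ => hpt c₀]
        rw [← Finset.add_sum_erase univ _ (mem_univ (0:F))]
        rw [map_zero, MulChar.map_zero, zero_add]
        rw [Finset.sum_congr rfl (fun c hc => htriv c (Finset.ne_of_mem_erase hc))]
        rw [Finset.sum_const, Finset.card_erase_of_mem (mem_univ 0), Finset.card_univ, hq]
        simp only [nsmul_eq_mul, mul_one]
        have : ((q - 1 : ℕ) : ℂ) = (q : ℂ) - 1 := by
          have : (1:ℕ) ≤ q := by omega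
          push_cast [Nat.cast_sub this]; ring
        exact this
      rw [← Finset.add_sum_erase univ _ (mem_univ (0:F))]
      rw [hsum0]
      rw [Finset.sum_congr rfl (fun c hc => hS1 c (Finset.ne_of_mem_erase hc))]
      rw [Finset.sum_const, Finset.card_erase_of_mem (mem_univ 0), Finset.card_univ, hq]
      have : ((q - 1 : ℕ) : ℂ) = (q : ℂ) - 1 := by
        have : (1:ℕ) ≤ q := by omega
        push_cast [Nat.cast_sub this]; ring
      rw [nsmul_eq_mul, this]
    -- combine
    rw [← Finset.add_sum_erase univ _ (mem_univ (0:F))] at h1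
    rw [hzero2] at h1
    rw [Finset.sum_congr rfl (fun c hc => hinner c (Finset.ne_of_mem_erase hc))] at h1
    rw [Finset.sum_const, Finset.card_erase_of_mem (mem_univ 0), Finset.card_univ, hq] at h1
    have hcast : ((q - 1 : ℕ) : ℂ) = (q : ℂ) - 1 := by
      have : (1:ℕ) ≤ q := by omega
      push_cast [Nat.cast_sub this]; ring
    rw [nsmul_eq_mul, hcast] at h1
    have := mul_left_cancel₀ hq1C (show ((q:ℂ)-1) * Q = ((q:ℂ)-1) * (-1 - S) by
      linear_combination h1)
    exact this
  -- Step 2/3 : coordinates of inverses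
  set v : F → E := fun b => (γ + ι b)⁻¹ with hvdef
  set dd : F → F := fun b => b3.repr (v b) 0 with hdd
  set bb : F → F := fun b => b3.repr (v b) 1 with hbb
  set aa : F → F := fun b => b3.repr (v b) 2 with haadef
  have hv : ∀ b, v b = ι (dd b) + ι (bb b) * γ + ι (aa b) * γ ^ 2 := fun b => coords (v b)
  have hvmul : ∀ b, (γ + ι b) * v b = 1 := fun b => mul_inv_cancel₀ (hγF b)
  have haa : ∀ b, aa b ≠ 0 := by
    intro b hab
    have h1 : (γ + ι b) * (ι (dd b) + ι (bb b) * γ) = 1 := by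
      have h2 := hvmul b
      rw [hv b, hab, map_zero, zero_mul, add_zero] at h2
      exact h2
    have h2 : ι (b * dd b - 1) + ι (dd b + b * bb b) * γ + ι (bb b) * γ ^ 2 = 0 := by
      simp only [map_sub, map_add, map_mul, map_one]
      linear_combination h1
    obtain ⟨e0, e1, e2⟩ := lin_indep _ _ _ h2
    rw [e2, mul_zero, add_zero] at e1
    rw [e1, mul_zero, zero_sub, neg_eq_zero] at e0
    exact one_ne_zero e0
  have hp_inj : Function.Injective (fun b => bb b / aa b) := by
    intro b₁ b₂ h
    simp only at h
    have hcross : ι (bb b₁) * ι (aa b₂) = ι (bb b₂) * ι (aa b₁) := by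
      rw [← map_mul, ← map_mul]
      congr 1
      rw [div_eq_div_iff (haa b₁) (haa b₂)] at h
      exact h
    have e₁ := hvmul b₁; rw [hv b₁] at e₁
    have e₂ := hvmul b₂; rw [hv b₂] at e₂
    have hzero : ι ((aa b₂ * dd b₁ - aa b₁ * dd b₂) * (b₁ * b₂) - (aa b₂ * b₂ - aa b₁ * b₁))
        + ι ((aa b₂ * dd b₁ - aa b₁ * dd b₂) * (b₁ + b₂) - (aa b₂ - aa b₁)) * γ
        + ι (aa b₂ * dd b₁ - aa b₁ * dd b₂) * γ ^ 2 = 0 := by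
      simp only [map_sub, map_add, map_mul]
      linear_combination (ι (aa b₂) * (γ + ι b₂)) * e₁ - (ι (aa b₁) * (γ + ι b₁)) * e₂
        - ((γ + ι b₁) * (γ + ι b₂) * γ) * hcross
    obtain ⟨f0, f1, f2⟩ := lin_indep _ _ _ hzero
    have ha : aa b₂ = aa b₁ := by
      rw [f2, zero_mul, zero_sub, neg_eq_zero, sub_eq_zero] at f1
      exact f1
    have hb : aa b₂ * b₂ = aa b₁ * b₁ := by
      rw [f2, zero_mul, zero_sub, neg_eq_zero, sub_eq_zero] at f0
      exact f0
    rw [ha] at hb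
    exact (mul_left_cancel₀ (haa b₁) hb).symm
  -- Step 4 : sum over translated inverses equals Q
  have hD : ∑ b : F, ∑ u : F, χ (ι u + v b) = Q := by
    have hbpoint : ∀ b u : F, χ (ι u + v b)
        = χ (ι (u * (aa b)⁻¹ + dd b * (aa b)⁻¹) + ι (bb b / aa b) * γ + γ ^ 2) := by
      intro b u
      have e1 : ι (aa b) * ι (u * (aa b)⁻¹ + dd b * (aa b)⁻¹) = ι u + ι (dd b) := by
        rw [← map_mul, ← map_add]; congr 1; field_simp [haa b]
      have e2 : ι (aa b) * ι (bb b / aa b) = ι (bb b) := by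
        rw [← map_mul]; congr 1; field_simp [haa b]
      have hfac : ι u + v b
          = ι (aa b) * (ι (u * (aa b)⁻¹ + dd b * (aa b)⁻¹) + ι (bb b / aa b) * γ + γ ^ 2) := by
        rw [hv b]
        linear_combination -e1 - γ * e2
      rw [hfac, map_mul, htriv (aa b) (haa b), one_mul]
    calc ∑ b : F, ∑ u : F, χ (ι u + v b)
        = ∑ b : F, ∑ t : F, χ (ι t + ι (bb b / aa b) * γ + γ ^ 2) := by
          refine Finset.sum_congr rfl fun b _ => ?_
          rw [Finset.sum_congr rfl fun u _ => hbpoint b u]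
          exact sum_affine (aa b) (dd b * (aa b)⁻¹) (haa b)
            (fun t => χ (ι t + ι (bb b / aa b) * γ + γ ^ 2))
      _ = Q := by
          rw [hQ]
          exact Fintype.sum_bijective _ (Finite.injective_iff_bijective.mp hp_inj)
            _ _ (fun b => rfl)
  -- Step 5 : assemble
  have hconjS : (starRingEnd ℂ) S = ∑ b : F, χ (v b) := by
    rw [hS, map_sum]
    refine Finset.sum_congr rfl fun b _ => ?_
    rw [chi_conj_aux]
  have hmain : S * (starRingEnd ℂ) S
      = ∑ b : F, ∑ a : F, χ ((γ + ι a) * v b) := by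
    rw [hconjS, hS, Finset.sum_mul_sum]
    rw [Finset.sum_comm]
    refine Finset.sum_congr rfl fun b _ => Finset.sum_congr rfl fun a _ => ?_
    rw [map_mul]
  have hinnerb : ∀ b : F, ∑ a : F, χ ((γ + ι a) * v b)
      = 1 + ((∑ u : F, χ (ι u + v b)) - χ (v b)) := by
    intro b
    rw [← Finset.add_sum_erase univ _ (mem_univ b)]
    congr 1
    · rw [hvmul b, map_one]
    · have hpt : ∀ a ∈ univ.erase b, χ ((γ + ι a) * v b) = χ (ι ((a - b)⁻¹) + v b) := by
        intro a ha
        have hab : a - b ≠ 0 := sub_ne_zero.mpr (Finset.ne_of_mem_erase ha)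
        have hfac : (γ + ι a) * v b = ι (a - b) * (ι (a - b)⁻¹ + v b) := by
          rw [mul_add, ← map_mul, mul_inv_cancel₀ hab, map_one, map_sub]
          linear_combination hvmul b
        rw [hfac, map_mul, htriv _ hab, one_mul, map_inv₀]
      rw [Finset.sum_congr rfl hpt]
      have hbij : ∑ a ∈ univ.erase b, χ (ι ((a - b)⁻¹) + v b)
          = ∑ u ∈ univ.erase 0, χ (ι u + v b) := by
        refine Finset.sum_nbij' (fun a => (a - b)⁻¹) (fun u => u⁻¹ + b) ?_ ?_ ?_ ?_ ?_
        · intro a ha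
          refine Finset.mem_erase.mpr ⟨?_, mem_univ _⟩
          exact inv_ne_zero (sub_ne_zero.mpr (Finset.ne_of_mem_erase ha))
        · intro u hu
          refine Finset.mem_erase.mpr ⟨?_, mem_univ _⟩
          intro hcontra
          rw [add_eq_right] at hcontra
          exact inv_ne_zero (Finset.ne_of_mem_erase hu) hcontra
        · intro a ha
          show ((a - b)⁻¹)⁻¹ + b = a
          rw [inv_inv, sub_add_cancel]
        · intro u hu
          show ((u⁻¹ + b) - b)⁻¹ = u
          rw [add_sub_cancel_right, inv_inv]
        · intro a ha
          rfl
      rw [hbij]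
      rw [Finset.sum_erase_eq_sub (mem_univ (0:F))]
      rw [map_zero, zero_add]
  have hfin : S * (starRingEnd ℂ) S
      = (q : ℂ) + Q - (starRingEnd ℂ) S := by
    rw [hmain, Finset.sum_congr rfl fun b _ => hinnerb b]
    rw [Finset.sum_add_distrib, Finset.sum_sub_distrib]
    rw [Finset.sum_const, Finset.card_univ, hq, hD, ← hconjS]
    push_cast
    ring
  rw [hfin, hQS]
  ring
end

section
/- Let q be a prime power, let β, γ be nonzero elements of F_{q^3} with γ generating F_{q^3} over F_q, and let χ be a nontrivial multiplicative character of F_{q^3} whose order divides q^2+q+1. Then |Σ_{a ∈ F_q} χ(β(γ + a))| ≤ √q + 1. -/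
noncomputable section AuxKatz
variable {q : ℕ} {F E : Type*} [Field F] [Field E] [Algebra F E]
    [Fintype F] [Fintype E]

set_option linter.unusedSectionVars false
set_option linter.unusedVariables false
set_option linter.unreachableTactic false
set_option linter.unusedTactic false
set_option linter.deprecated false

lemma aux_indep (hdeg : Module.finrank F E = 3) (γ : E)
    (hγ : Algebra.adjoin F {γ} = ⊤) :
    LinearIndependent F (fun i : Fin 3 => γ ^ (i : ℕ)) := by
  have hint : IsIntegral F γ := IsIntegral.of_finite F γ
  have h1 : (IntermediateField.adjoin F {γ}).toSubalgebra = ⊤ := by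
    rw [IntermediateField.adjoin_simple_toSubalgebra_of_isAlgebraic hint.isAlgebraic, hγ]
  have h2 : IntermediateField.adjoin F {γ} = ⊤ := by
    apply IntermediateField.toSubalgebra_injective
    rw [h1, IntermediateField.top_toSubalgebra]
  have h3 : (minpoly F γ).natDegree = 3 := by
    rw [← IntermediateField.adjoin.finrank hint, h2, ← hdeg]
    exact IntermediateField.finrank_top'
  have := linearIndependent_pow (K := F) (S := E) γ
  rwa [h3] at this

lemma aux_root (χ : MulChar E ℂ) (hχ : χ ^ (q ^ 2 + q + 1) = 1)
    {y : E} (hy : y ≠ 0) : χ y ^ (q ^ 2 + q + 1) = 1 := by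
  have hu : IsUnit y := IsUnit.mk0 y hy
  have := congrArg (fun ψ : MulChar E ℂ => ψ y) hχ
  simpa [MulChar.pow_apply', MulChar.one_apply hu] using this

lemma aux_abs (χ : MulChar E ℂ) (hχ : χ ^ (q ^ 2 + q + 1) = 1)
    (hq2 : 2 ≤ q) {y : E} (hy : y ≠ 0) : ‖χ y‖ = 1 := by
  have h := aux_root χ hχ hy
  have h2 : ‖χ y‖ ^ (q ^ 2 + q + 1) = 1 := by
    rw [← norm_pow, h, norm_one]
  have hN : q ^ 2 + q + 1 ≠ 0 := by positivity
  rcases lt_trichotomy (‖χ y‖) 1 with h3 | h3 | h3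
  · have := pow_lt_one₀ (norm_nonneg (χ y)) h3 hN
    rw [h2] at this; exact absurd this (lt_irrefl 1)
  · exact h3
  · have := one_lt_pow₀ h3 hN
    rw [h2] at this; exact absurd this (lt_irrefl 1)

lemma aux_cube (hq1 : 1 ≤ q) : (q ^ 2 + q + 1) * (q - 1) = q ^ 3 - 1 := by
  obtain ⟨n, rfl⟩ : ∃ n, q = n + 1 := ⟨q - 1, by omega⟩
  have h0 : n + 1 - 1 = n := rfl
  rw [h0]
  have h1 : ((n+1) ^ 2 + (n+1) + 1) * n = n ^ 3 + 3 * n ^ 2 + 3 * n := by ring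
  have h2 : (n+1) ^ 3 = n ^ 3 + 3 * n ^ 2 + 3 * n + 1 := by ring
  omega

lemma aux_chiF (hq : Fintype.card F = q) (hdeg : Module.finrank F E = 3)
    (χ : MulChar E ℂ) (hχ : χ ^ (q ^ 2 + q + 1) = 1)
    {c : F} (hc : c ≠ 0) : χ (algebraMap F E c) = 1 := by
  classical
  have hq2 : 2 ≤ q := hq ▸ Fintype.one_lt_card
  have cardE : Fintype.card E = q ^ 3 := by
    rw [Module.card_eq_pow_finrank (K := F), hq, hdeg]
  have cardU : Fintype.card Eˣ = q ^ 3 - 1 := by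
    rw [Fintype.card_units, cardE]
  have hcE : algebraMap F E c ≠ 0 := by simpa using hc
  set u : Eˣ := Units.mk0 _ hcE with hu
  obtain ⟨g, hg⟩ := IsCyclic.exists_generator (α := Eˣ)
  have hordg : orderOf g = q ^ 3 - 1 := by
    rw [orderOf_eq_card_of_forall_mem_zpowers hg, Nat.card_eq_fintype_card, cardU]
  obtain ⟨k, hk⟩ := hg u
  replace hk : g ^ k = u := hk
  have hcpow : (algebraMap F E c) ^ (q - 1) = 1 := by
    rw [← map_pow]
    have : c ^ (q - 1) = 1 := by
      rw [← hq]; exact FiniteField.pow_card_sub_one_eq_one c hc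
    rw [this, map_one]
  have hpow : u ^ (q - 1) = 1 := by
    rw [Units.ext_iff]
    simpa [hu] using hcpow
  have hdvd : ((q ^ 3 - 1 : ℕ) : ℤ) ∣ k * (q - 1 : ℕ) := by
    rw [← hordg, orderOf_dvd_iff_zpow_eq_one, zpow_mul, hk, zpow_natCast, hpow]
  have hfact : ((q ^ 3 - 1 : ℕ) : ℤ) = ((q ^ 2 + q + 1 : ℕ) : ℤ) * ((q - 1 : ℕ) : ℤ) := by
    rw [← Nat.cast_mul, aux_cube (by omega)]
  have hne : ((q - 1 : ℕ) : ℤ) ≠ 0 := by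
    have : 0 < q - 1 := by omega
    exact_mod_cast this.ne'
  have hdvd2 : ((q ^ 2 + q + 1 : ℕ) : ℤ) ∣ k :=
    (mul_dvd_mul_iff_right hne).mp (by rwa [hfact] at hdvd)
  obtain ⟨m, hm⟩ := hdvd2
  have humk : ((g ^ m) ^ ((q ^ 2 + q + 1 : ℕ) : ℤ)) = u := by
    rw [← zpow_mul, mul_comm m ((q ^ 2 + q + 1 : ℕ) : ℤ), ← hm, hk]
  have hco : ((g ^ m : Eˣ) : E) ^ (q ^ 2 + q + 1) = algebraMap F E c := by
    have := congrArg (Units.val) humk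
    simpa [hu, Units.val_zpow_eq_zpow_val, ← zpow_natCast] using this
  rw [← hco, map_pow, aux_root χ hχ (Units.ne_zero _)]

/-- Representatives of the projective line `{1} ∪ {γ + a}`. -/
def aux_d (F : Type*) {E : Type*} [Field F] [Field E] [Algebra F E] (γ : E) :
    Option F → E := fun i => i.elim 1 fun a => γ + algebraMap F E a

variable (γ : E)

lemma aux_indep3 (hLI : LinearIndependent F (fun i : Fin 3 => γ ^ (i : ℕ)))
    (w u v : F)
    (h : algebraMap F E w + algebraMap F E u * γ + algebraMap F E v * γ ^ 2 = 0) :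
    w = 0 ∧ u = 0 ∧ v = 0 := by
  have h2 := Fintype.linearIndependent_iff.mp hLI ![w, u, v] ?_
  · exact ⟨h2 0, h2 1, h2 2⟩
  · rw [Fin.sum_univ_three]
    simp only [Matrix.cons_val_zero, Matrix.cons_val_one, Matrix.head_cons,
      Matrix.cons_val_two, Matrix.tail_cons, Algebra.smul_def]
    rw [Fin.val_zero, Fin.val_one, pow_zero, pow_one]
    rw [show ((2 : Fin 3) : ℕ) = 2 from rfl]
    linear_combination h

lemma aux_indep2 (hLI : LinearIndependent F (fun i : Fin 3 => γ ^ (i : ℕ)))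
    (u v : F) (h : algebraMap F E u + algebraMap F E v * γ = 0) :
    u = 0 ∧ v = 0 := by
  have := aux_indep3 γ hLI u v 0 (by rw [map_zero]; linear_combination h)
  exact ⟨this.1, this.2.1⟩

lemma aux_gnotF (hLI : LinearIndependent F (fun i : Fin 3 => γ ^ (i : ℕ)))
    (t : F) : γ ≠ algebraMap F E t := by
  intro h
  have := aux_indep2 γ hLI t (-1) (by rw [map_neg, map_one]; linear_combination -h)
  simpa using this.2

lemma aux_d0 (hLI : LinearIndependent F (fun i : Fin 3 => γ ^ (i : ℕ)))
    (i : Option F) : aux_d F γ i ≠ 0 := by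
  cases i with
  | none => exact one_ne_zero
  | some a =>
      intro h
      simp only [aux_d, Option.elim] at h
      exact aux_gnotF γ hLI (-a) (by rw [map_neg]; linear_combination h)

lemma aux_proj (hLI : LinearIndependent F (fun i : Fin 3 => γ ^ (i : ℕ)))
    (i j : Option F) (c : F)
    (h : aux_d F γ i = algebraMap F E c * aux_d F γ j) : i = j ∧ c = 1 := by
  have einj : Function.Injective (algebraMap F E) := (algebraMap F E).injective
  cases i with
  | none =>
    cases j with
    | none =>
        refine ⟨rfl, einj ?_⟩
        rw [map_one]
        simpa [aux_d] using h.symm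
    | some b =>
        exfalso
        simp only [aux_d, Option.elim] at h
        obtain ⟨h3, h4⟩ := aux_indep2 γ hLI (c * b - 1) c
          (by rw [map_sub, map_mul, map_one]; linear_combination -h)
        rw [h4] at h3
        simp at h3
  | some a =>
    cases j with
    | none =>
        exfalso
        simp only [aux_d, Option.elim, mul_one] at h
        have := aux_indep2 γ hLI (a - c) 1
          (by rw [map_sub, map_one]; linear_combination h)
        simpa using this.2
    | some b =>
        simp only [aux_d, Option.elim] at h
        obtain ⟨h3, h4⟩ := aux_indep2 γ hLI (a - c * b) (1 - c)
          (by rw [map_sub, map_mul, map_sub, map_one]; linear_combination h)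
        have hc : c = 1 := by linear_combination -h4
        have hab : a = b := by rw [hc] at h3; linear_combination h3
        exact ⟨by rw [hab], hc⟩

lemma aux_rep (u v : F) (h : algebraMap F E u + algebraMap F E v * γ ≠ 0) :
    ∃ (c : F) (i : Option F), c ≠ 0 ∧
      algebraMap F E u + algebraMap F E v * γ = algebraMap F E c * aux_d F γ i := by
  by_cases hv : v = 0
  · refine ⟨u, none, ?_, ?_⟩
    · intro hu; apply h; rw [hu, hv]; simp
    · simp [aux_d, hv]
  · refine ⟨v, some (u / v), hv, ?_⟩
    simp only [aux_d, Option.elim]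
    rw [mul_add, ← map_mul, mul_div_cancel₀ _ hv]
    ring

lemma aux_dform (i : Option F) :
    ∃ u v : F, aux_d F γ i = algebraMap F E u + algebraMap F E v * γ := by
  cases i with
  | none => exact ⟨1, 0, by simp [aux_d]⟩
  | some a => exact ⟨a, 1, by simp [aux_d]; ring⟩

lemma aux_exist (hdeg : Module.finrank F E = 3)
    (hLI : LinearIndependent F (fun i : Fin 3 => γ ^ (i : ℕ)))
    (x : E) (hx0 : x ≠ 0) (hxF : ∀ t : F, x ≠ algebraMap F E t) :
    ∃ (i j : Option F) (c : F), c ≠ 0 ∧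
      algebraMap F E c * aux_d F γ i * (aux_d F γ j)⁻¹ = x := by
  have hni : ¬ LinearIndependent F ![(1 : E), γ, x, x * γ] := by
    intro hli
    have := hli.fintype_card_le_finrank
    rw [hdeg] at this
    simp at this
  obtain ⟨g, hg0, ineq, hgi⟩ := Fintype.not_linearIndependent_iff.mp hni
  rw [Fin.sum_univ_four] at hg0
  simp only [Matrix.cons_val_zero, Matrix.cons_val_one, Matrix.head_cons,
    Matrix.cons_val_two, Matrix.tail_cons, Matrix.cons_val_three,
    Algebra.smul_def, mul_one] at hg0
  have hAB : x * (algebraMap F E (g 2) + algebraMap F E (g 3) * γ)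
      = -(algebraMap F E (g 0) + algebraMap F E (g 1) * γ) := by
    linear_combination hg0
  have hA0 : algebraMap F E (g 2) + algebraMap F E (g 3) * γ ≠ 0 := by
    intro hA
    obtain ⟨h2, h3⟩ := aux_indep2 γ hLI (g 2) (g 3) hA
    rw [hA, mul_zero] at hAB
    obtain ⟨h0, h1⟩ := aux_indep2 γ hLI (g 0) (g 1) (by linear_combination hAB)
    fin_cases ineq
    · exact hgi h0
    · exact hgi h1
    · exact hgi h2
    · exact hgi h3
  have hxA0 : algebraMap F E (-(g 0)) + algebraMap F E (-(g 1)) * γ ≠ 0 := by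
    intro hB
    apply mul_ne_zero hx0 hA0
    rw [hAB]
    rw [map_neg, map_neg] at hB
    linear_combination hB
  obtain ⟨c', j, hc', hj⟩ := aux_rep γ _ _ hA0
  obtain ⟨c'', i, hc'', hi⟩ := aux_rep γ _ _ hxA0
  refine ⟨i, j, c'' / c', div_ne_zero hc'' hc', ?_⟩
  have hdj : aux_d F γ j ≠ 0 := aux_d0 γ hLI j
  have hec' : algebraMap F E c' ≠ 0 :=
    fun hh => hc' ((algebraMap F E).injective (by rw [hh, map_zero]))
  have hkey : x * (algebraMap F E c' * aux_d F γ j) = algebraMap F E c'' * aux_d F γ i := by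
    rw [← hj, ← hi, hAB, map_neg, map_neg]; ring
  rw [map_div₀]
  field_simp
  linear_combination -hkey

lemma aux_span (a b : F) (hab : a ≠ b) :
    ∃ p r s t : F,
      (1 : E) = algebraMap F E p * (γ + algebraMap F E a)
          + algebraMap F E r * (γ + algebraMap F E b) ∧
      γ = algebraMap F E s * (γ + algebraMap F E a)
          + algebraMap F E t * (γ + algebraMap F E b) := by
  have h : a - b ≠ 0 := sub_ne_zero.mpr hab
  have hE : algebraMap F E (a - b) ≠ 0 :=
    fun hh => h ((algebraMap F E).injective (by rw [hh, map_zero]))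
  have hE' : algebraMap F E a - algebraMap F E b ≠ 0 := by rw [← map_sub]; exact hE
  refine ⟨(a-b)⁻¹, -(a-b)⁻¹, 1 - a*(a-b)⁻¹, a*(a-b)⁻¹, ?_, ?_⟩
  · simp only [map_neg, map_inv₀, map_sub]
    field_simp
    ring
  · simp only [map_sub, map_one, map_mul, map_inv₀]
    field_simp
    ring

lemma aux_span2 (j j' : Option F) (hjj : j ≠ j') :
    ∃ p r s t : F,
      (1 : E) = algebraMap F E p * aux_d F γ j + algebraMap F E r * aux_d F γ j' ∧
      γ = algebraMap F E s * aux_d F γ j + algebraMap F E t * aux_d F γ j' := by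
  cases j with
  | none =>
    cases j' with
    | none => exact absurd rfl hjj
    | some b =>
        refine ⟨1, 0, -b, 1, ?_, ?_⟩ <;> simp [aux_d] <;> ring
  | some a =>
    cases j' with
    | none =>
        refine ⟨0, 1, 1, -a, ?_, ?_⟩ <;> simp [aux_d] <;> ring
    | some b =>
        have hab : a ≠ b := fun h => hjj (by rw [h])
        obtain ⟨p, r, s, t, h1, h2⟩ := aux_span γ a b hab
        exact ⟨p, r, s, t, h1, h2⟩

lemma aux_uniq (hLI : LinearIndependent F (fun i : Fin 3 => γ ^ (i : ℕ)))
    (x : E) (hxF : ∀ t : F, x ≠ algebraMap F E t)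
    (i j : Option F) (c : F) (hc : c ≠ 0)
    (h1 : algebraMap F E c * aux_d F γ i * (aux_d F γ j)⁻¹ = x)
    (i' j' : Option F) (c' : F) (hc' : c' ≠ 0)
    (h2 : algebraMap F E c' * aux_d F γ i' * (aux_d F γ j')⁻¹ = x) :
    i = i' ∧ j = j' ∧ c = c' := by
  have hdj := aux_d0 γ hLI j
  have hdj' := aux_d0 γ hLI j'
  have hdi' := aux_d0 γ hLI i'
  have hec : algebraMap F E c ≠ 0 :=
    fun hh => hc ((algebraMap F E).injective (by rw [hh, map_zero]))
  have hec' : algebraMap F E c' ≠ 0 :=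
    fun hh => hc' ((algebraMap F E).injective (by rw [hh, map_zero]))
  have hxj : x * aux_d F γ j = algebraMap F E c * aux_d F γ i := by
    rw [← h1]; field_simp
  have hxj' : x * aux_d F γ j' = algebraMap F E c' * aux_d F γ i' := by
    rw [← h2]; field_simp
  by_cases hjj : j = j'
  · subst hjj
    have heq : aux_d F γ i = algebraMap F E (c⁻¹ * c') * aux_d F γ i' := by
      rw [map_mul, map_inv₀]
      field_simp
      linear_combination hxj' - hxj
    obtain ⟨hii, hcc⟩ := aux_proj γ hLI _ _ _ heq
    exact ⟨hii, rfl, inv_mul_eq_one₀ hc |>.mp hcc⟩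
  · exfalso
    obtain ⟨p, r, s, t, hsp1, hsp2⟩ := aux_span2 γ j j' hjj
    obtain ⟨u1, v1, hfi⟩ := aux_dform γ i
    obtain ⟨u2, v2, hfi'⟩ := aux_dform γ i'
    set e := algebraMap F E with he
    have hx : x = e (p*c*u1 + r*c'*u2) + e (p*c*v1 + r*c'*v2) * γ := by
      simp only [map_add, map_mul]
      linear_combination x * hsp1 + e p * hxj + e r * hxj'
        + (e p * e c) * hfi + (e r * e c') * hfi'
    have hxg : x * γ = e (s*c*u1 + t*c'*u2) + e (s*c*v1 + t*c'*v2) * γ := by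
      simp only [map_add, map_mul]
      linear_combination x * hsp2 + e s * hxj + e t * hxj'
        + (e s * e c) * hfi + (e t * e c') * hfi'
    have hrel : e (s*c*u1 + t*c'*u2) + e ((s*c*v1 + t*c'*v2) - (p*c*u1 + r*c'*u2)) * γ
        + e (-(p*c*v1 + r*c'*v2)) * γ ^ 2 = 0 := by
      simp only [map_add, map_mul, map_sub, map_neg] at hx hxg ⊢
      linear_combination γ * hx - hxg
    obtain ⟨-, -, hV⟩ := aux_indep3 γ hLI _ _ _ hrel
    have hV0 : p*c*v1 + r*c'*v2 = 0 := neg_eq_zero.mp hV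
    exact hxF (p*c*u1 + r*c'*u2) (by rw [hx, hV0, map_zero, zero_mul, add_zero])

lemma aux_key (hq : Fintype.card F = q) (hdeg : Module.finrank F E = 3)
    (γ : E) (hLI : LinearIndependent F (fun i : Fin 3 => γ ^ (i : ℕ)))
    (χ : MulChar E ℂ) (hχ₁ : χ ≠ 1) (hχ : χ ^ (q ^ 2 + q + 1) = 1) :
    ∑ i : Option F, ∑ j : Option F,
      χ (aux_d F γ i * (aux_d F γ j)⁻¹) = (q : ℂ) := by
  classical
  have hq2 : 2 ≤ q := hq ▸ Fintype.one_lt_card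
  set e := algebraMap F E with he
  set d := aux_d F γ with hd
  set f : Option F × Option F × Fˣ → E :=
    fun p => e (p.2.2 : F) * d p.1 * (d p.2.1)⁻¹ with hf
  have einj : Function.Injective e := (algebraMap F E).injective
  have hene : ∀ c : F, c ≠ 0 → e c ≠ 0 :=
    fun c hc hh => hc (einj (by rw [hh, map_zero]))
  have hd0 : ∀ i, d i ≠ 0 := aux_d0 γ hLI
  -- Left evaluation
  have H1 : ∑ p : Option F × Option F × Fˣ, χ (f p)
      = ((q : ℂ) - 1) * ∑ i : Option F, ∑ j : Option F, χ (d i * (d j)⁻¹) := by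
    rw [Fintype.sum_prod_type]
    rw [Finset.mul_sum]
    refine Finset.sum_congr rfl fun i _ => ?_
    rw [Fintype.sum_prod_type]
    rw [Finset.mul_sum]
    refine Finset.sum_congr rfl fun j _ => ?_
    have : ∀ c : Fˣ, χ (f (i, j, c)) = χ (d i * (d j)⁻¹) := by
      intro c
      rw [hf]
      simp only []
      rw [mul_assoc, map_mul, aux_chiF hq hdeg χ hχ (Units.ne_zero c), one_mul]
    rw [Finset.sum_congr rfl fun c _ => this c, Finset.sum_const, Finset.card_univ,
      Fintype.card_units, hq, nsmul_eq_mul]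
    congr 1
    have : (1 : ℕ) ≤ q := by omega
    push_cast [Nat.cast_sub this]
    ring
  -- fiberwise evaluation
  have H2 : ∑ p : Option F × Option F × Fˣ, χ (f p)
      = ∑ x : E, ((Finset.univ.filter (fun p => f p = x)).card : ℂ) * χ x := by
    rw [← Finset.sum_fiberwise Finset.univ f (fun p => χ (f p))]
    refine Finset.sum_congr rfl fun x _ => ?_
    rw [Finset.sum_congr rfl (fun p hp => by
      rw [(Finset.mem_filter.mp hp).2]), Finset.sum_const, nsmul_eq_mul]
  -- the set of nonzero "scalars"
  set S : Finset E := Finset.univ.image (fun u : Fˣ => e (u : F)) with hS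
  have hS0 : (0 : E) ∉ S := by
    simp only [hS, Finset.mem_image]
    rintro ⟨u, -, hu⟩
    exact hene _ (Units.ne_zero u) hu
  have hfne : ∀ p, f p ≠ 0 := fun p =>
    mul_ne_zero (mul_ne_zero (hene _ (Units.ne_zero _)) (hd0 _)) (inv_ne_zero (hd0 _))
  -- fiber over elements of S
  have HC1 : ∀ u : Fˣ, (Finset.univ.filter (fun p => f p = e (u : F))).card = q + 1 := by
    intro u
    have : Finset.univ.filter (fun p => f p = e (u : F))
        = Finset.univ.image (fun i : Option F => (i, i, u)) := by
      ext p
      simp only [Finset.mem_filter, Finset.mem_univ, true_and, Finset.mem_image]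
      constructor
      · intro hp
        obtain ⟨i, j, c⟩ := p
        have hc := hene _ (Units.ne_zero c)
        have hp' : e (u : F) * d j = e (c : F) * d i := by
          rw [← hp]
          show e (c : F) * d i * (d j)⁻¹ * d j = e (c : F) * d i
          rw [mul_assoc, inv_mul_cancel₀ (hd0 j), mul_one]
        have hpe : d i = e ((c : F)⁻¹ * (u:F)) * d j := by
          rw [map_mul, map_inv₀, mul_assoc, hp', ← mul_assoc, inv_mul_cancel₀ hc, one_mul]
        obtain ⟨hij, hcu⟩ := aux_proj γ hLI _ _ _ hpe
        have : c = u := by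
          ext
          exact inv_mul_eq_one₀ (Units.ne_zero c) |>.mp hcu
        exact ⟨i, by rw [hij, this]⟩
      · rintro ⟨i, rfl⟩
        show e (u : F) * d i * (d i)⁻¹ = e (u : F)
        rw [mul_assoc, mul_inv_cancel₀ (hd0 i), mul_one]
    rw [this, Finset.card_image_of_injective _ (fun a b h => (Prod.ext_iff.mp h).1),
      Finset.card_univ, Fintype.card_option, hq]
  -- fiber over non-scalars
  have HC2 : ∀ x : E, x ≠ 0 → x ∉ S →
      (Finset.univ.filter (fun p => f p = x)).card = 1 := by
    intro x hx0 hxS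
    have hxF : ∀ t : F, x ≠ e t := by
      intro t hxt
      by_cases ht : t = 0
      · exact hx0 (by rw [hxt, ht, map_zero])
      · exact hxS (by rw [hS, Finset.mem_image]
                      exact ⟨Units.mk0 t ht, Finset.mem_univ _, hxt.symm⟩)
    obtain ⟨i, j, c, hc, hfx⟩ := aux_exist γ hdeg hLI x hx0 hxF
    rw [Finset.card_eq_one]
    refine ⟨(i, j, Units.mk0 c hc), ?_⟩
    rw [Finset.eq_singleton_iff_unique_mem]
    constructor
    · simp only [Finset.mem_filter, Finset.mem_univ, true_and, hf]
      exact hfx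
    · rintro ⟨i', j', c'⟩ hp
      simp only [Finset.mem_filter, Finset.mem_univ, true_and, hf] at hp
      obtain ⟨h1, h2, h3⟩ := aux_uniq γ hLI x hxF i' j' (c' : F) (Units.ne_zero c') hp
        i j c hc hfx
      refine Prod.ext h1 (Prod.ext h2 ?_)
      exact Units.ext h3
  -- sum over all x
  have H3 : ∑ x : E, ((Finset.univ.filter (fun p => f p = x)).card : ℂ) * χ x
      = (q : ℂ) * ((q : ℂ) - 1) := by
    have hpt : ∀ x : E, ((Finset.univ.filter (fun p => f p = x)).card : ℂ) * χ x
        = χ x + (q : ℂ) * (if x ∈ S then χ x else 0) := by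
      intro x
      by_cases hx0 : x = 0
      · subst hx0
        rw [Finset.filter_eq_empty_iff.mpr (fun {p} _ => hfne p)]
        have hch0 : χ (0 : E) = 0 := by
          apply MulChar.map_nonunit
          simp
        simp [hch0]
      · by_cases hxS : x ∈ S
        · obtain ⟨u, -, hu⟩ := Finset.mem_image.mp hxS
          rw [if_pos hxS, ← hu, HC1]
          push_cast
          ring
        · rw [if_neg hxS, HC2 x hx0 hxS]
          push_cast
          ring
    rw [Finset.sum_congr rfl fun x _ => hpt x, Finset.sum_add_distrib]
    rw [MulChar.sum_eq_zero_of_ne_one hχ₁, zero_add]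
    rw [← Finset.mul_sum, Finset.sum_ite_mem, Finset.univ_inter]
    have : ∑ x ∈ S, χ x = (q : ℂ) - 1 := by
      rw [hS, Finset.sum_image (fun a _ b _ h => Units.ext (einj h))]
      rw [Finset.sum_congr rfl fun u _ => aux_chiF hq hdeg χ hχ (Units.ne_zero u)]
      rw [Finset.sum_const, Finset.card_univ, Fintype.card_units, hq, nsmul_eq_mul,
        mul_one]
      have : (1 : ℕ) ≤ q := by omega
      push_cast [Nat.cast_sub this]
      ring
    rw [this]
  have hq1 : ((q : ℂ) - 1) ≠ 0 := by
    have hne : (q : ℂ) ≠ 1 := by exact_mod_cast (by omega : q ≠ 1)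
    exact sub_ne_zero.mpr hne
  have hfin := H1.symm.trans (H2.trans H3)
  have h4 : ((q:ℂ) - 1) * (∑ i : Option F, ∑ j : Option F, χ (d i * (d j)⁻¹))
      = ((q:ℂ) - 1) * (q : ℂ) := by linear_combination hfin
  exact mul_left_cancel₀ hq1 h4

theorem improved_katz_cubic'
    (hq : Fintype.card F = q)
    (hdeg : Module.finrank F E = 3)
    (β γ' : E) (hβ : β ≠ 0)
    (hLI : LinearIndependent F (fun i : Fin 3 => γ' ^ (i : ℕ)))
    (χ : MulChar E ℂ) (hχ₁ : χ ≠ 1) (hχ : χ ^ (q ^ 2 + q + 1) = 1) :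
    ‖∑ a : F, χ (β * (γ' + algebraMap F E a))‖ ≤ Real.sqrt q + 1 := by
  classical
  have hq2 : 2 ≤ q := hq ▸ Fintype.one_lt_card
  set e := algebraMap F E with he
  set d := aux_d F γ' with hd
  set T := ∑ i : Option F, χ (d i) with hT
  have hd0 : ∀ i, d i ≠ 0 := aux_d0 γ' hLI
  have hconj : ∀ y : E, y ≠ 0 → (starRingEnd ℂ) (χ y) = χ y⁻¹ := by
    intro y hy
    have h1 : χ y * χ y⁻¹ = 1 := by rw [← map_mul, mul_inv_cancel₀ hy, map_one]
    have habs := aux_abs χ hχ hq2 hy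
    rw [← Complex.inv_eq_conj habs]
    exact (eq_inv_of_mul_eq_one_right h1).symm
  have hTT : T * (starRingEnd ℂ) T = (q : ℂ) := by
    rw [hT, map_sum]
    rw [show ∑ j : Option F, (starRingEnd ℂ) (χ (d j)) = ∑ j : Option F, χ (d j)⁻¹ from
      Finset.sum_congr rfl fun j _ => hconj _ (hd0 j)]
    rw [Finset.sum_mul_sum]
    rw [← aux_key hq hdeg γ' hLI χ hχ₁ hχ]
    exact Finset.sum_congr rfl fun i _ => Finset.sum_congr rfl fun j _ => (map_mul χ _ _).symm
  have hnormT : ‖T‖ = Real.sqrt q := by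
    have h1 : (Complex.normSq T : ℂ) = (q : ℂ) := by rw [← Complex.mul_conj]; exact hTT
    have h2 : Complex.normSq T = (q : ℝ) := by exact_mod_cast h1
    rw [Complex.norm_def, h2]
  have hTo : T = 1 + ∑ a : F, χ (γ' + e a) := by
    rw [hT, Fintype.sum_option]
    congr 1
    show χ (aux_d F γ' none) = 1
    have : aux_d F γ' none = 1 := rfl
    rw [this, map_one]
  have hsum : ∑ a : F, χ (β * (γ' + e a)) = χ β * (T - 1) := by
    rw [show ∑ a : F, χ (β * (γ' + e a)) = ∑ a : F, χ β * χ (γ' + e a) from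
      Finset.sum_congr rfl fun a _ => map_mul χ _ _, ← Finset.mul_sum]
    congr 1
    rw [hTo]
    ring
  rw [hsum, norm_mul, aux_abs χ hχ hq2 hβ, one_mul]
  calc ‖T - 1‖ ≤ ‖T‖ + ‖(1 : ℂ)‖ := by
          exact norm_sub_le T 1
    _ = Real.sqrt q + 1 := by rw [hnormT, norm_one]

end AuxKatz

/-- Improved Katz bound for cubic extensions: if `γ` generates the cubic
extension `E` of `F` (`|F| = q`), `β ≠ 0`, and `χ` is a nontrivial
multiplicative character of `E` whose order divides `q² + q + 1`, then
`|Σ_{a ∈ F} χ(β(γ + a))| ≤ √q + 1`. -/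
theorem improved_katz_cubic
    (q : ℕ) (F E : Type*) [Field F] [Field E] [Algebra F E]
    [Fintype F] [Fintype E]
    (hq : Fintype.card F = q)
    (hdeg : Module.finrank F E = 3)
    (β γ : E) (hβ : β ≠ 0) (hγ : Algebra.adjoin F {γ} = ⊤)
    (χ : MulChar E ℂ) (hχ₁ : χ ≠ 1) (hχ : χ ^ (q ^ 2 + q + 1) = 1) :
    ‖∑ a : F, χ (β * (γ + algebraMap F E a))‖ ≤ Real.sqrt q + 1 :=
  improved_katz_cubic' hq hdeg β γ hβ (aux_indep hdeg γ hγ) χ hχ₁ hχ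
end

section
/- For q = 5, there exist a nonzero β ∈ F_{5^3} and a generator γ of F_{5^3} over F_5 such that β(γ + a) is not a primitive element (i.e., not a generator of the cyclic group F_{5^3}*) for any a ∈ F_5. -/
open Polynomial

instance : Fact (Nat.Prime 5) := ⟨by norm_num⟩

noncomputable instance : Fintype (GaloisField 5 3) := Fintype.ofFinite _

lemma aux_card125 : Fintype.card (GaloisField 5 3) = 125 := by
  have := GaloisField.card 5 3 (by norm_num)
  rw [Nat.card_eq_fintype_card] at this
  simpa using this

/-- If `z` is a square in `F_125`, its order is not `124`. -/
lemma aux_not124 (z w : GaloisField 5 3) (hw : w ^ 2 = z) : orderOf z ≠ 124 := by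
  have h5 : (5 : GaloisField 5 3) = 0 := by
    have := CharP.cast_eq_zero (GaloisField 5 3) 5
    exact_mod_cast this
  intro hord
  have h124 : z ^ 124 = 1 := by rw [← hord]; exact pow_orderOf_eq_one z
  have h62 : z ^ 62 ≠ 1 := by
    intro h
    have := orderOf_dvd_of_pow_eq_one h
    rw [hord] at this
    omega
  have hfac : (z ^ 62 - 1) * (z ^ 62 + 1) = 0 := by
    have : (z ^ 62) ^ 2 = 1 := by rw [← pow_mul]; exact h124
    linear_combination this
  have hneg : z ^ 62 = -1 := by
    rcases mul_eq_zero.mp hfac with h | h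
    · exact absurd (by linear_combination h) h62
    · linear_combination h
  have hwc : w ^ 125 = w := by
    have := FiniteField.pow_card w
    rwa [aux_card125] at this
  have hzw : z ^ 62 * w = w := by
    calc z ^ 62 * w = (w ^ 2) ^ 62 * w := by rw [hw]
    _ = w ^ 125 := by ring
    _ = w := hwc
  rw [hneg] at hzw
  have h2w : (2 : GaloisField 5 3) * w = 0 := by linear_combination -hzw
  have h2 : (2 : GaloisField 5 3) ≠ 0 := by
    intro h
    have : (1 : GaloisField 5 3) = 0 := by linear_combination h5 - 2 * h
    exact one_ne_zero this
  have hw0 : w = 0 := by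
    rcases mul_eq_zero.mp h2w with h | h
    · exact absurd h h2
    · exact h
  have hz0 : z = 0 := by rw [← hw, hw0]; ring
  rw [hz0] at h124
  simp at h124

/-- `F_125` contains a root of `X^3 + X + 1` which generates it over `F_5`. -/
lemma aux_exists_root : ∃ γ : GaloisField 5 3,
    γ ^ 3 + γ + 1 = 0 ∧ Algebra.adjoin (ZMod 5) {γ} = ⊤ := by
  set f : (ZMod 5)[X] := X ^ 3 + X + 1 with hf
  have hmonic : f.Monic := by rw [hf]; monicity!
  have hdeg : f.natDegree = 3 := by rw [hf]; compute_degree!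
  have hroots : f.roots = 0 := by
    apply Multiset.eq_zero_of_forall_notMem
    intro x hx
    rw [mem_roots hmonic.ne_zero] at hx
    have : x ^ 3 + x + 1 = 0 := by simpa [hf, IsRoot] using hx
    have hd : ∀ y : ZMod 5, y ^ 3 + y + 1 ≠ 0 := by decide
    exact hd x this
  have hirr : Irreducible f :=
    (hmonic.irreducible_iff_roots_eq_zero_of_degree_le_three
      (by omega) (by omega)).mpr hroots
  haveI : Fact (Irreducible f) := ⟨hirr⟩
  let pb := AdjoinRoot.powerBasis (f := f) hmonic.ne_zero
  haveI : Module.Finite (ZMod 5) (AdjoinRoot f) := pb.finite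
  haveI : Finite (AdjoinRoot f) := Module.finite_of_finite (ZMod 5)
  haveI : Fintype (AdjoinRoot f) := Fintype.ofFinite _
  have hcard : Fintype.card (AdjoinRoot f) = Fintype.card (GaloisField 5 3) := by
    rw [Module.card_fintype pb.basis]
    have hc : Nat.card (GaloisField 5 3) = 5 ^ 3 := GaloisField.card 5 3 (by norm_num)
    rw [Nat.card_eq_fintype_card] at hc
    simp [hc, AdjoinRoot.powerBasis_dim, hdeg, ZMod.card, pb]
  let e : AdjoinRoot f ≃ₐ[ZMod 5] GaloisField 5 3 :=
    FiniteField.algEquivOfCardEq 5 hcard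
  refine ⟨e (AdjoinRoot.root f), ?_, ?_⟩
  · have hr : aeval (AdjoinRoot.root f) f = 0 := by
      rw [AdjoinRoot.aeval_eq]; exact AdjoinRoot.mk_self
    have h2 : aeval (e (AdjoinRoot.root f)) f = 0 := by
      simpa [hr] using aeval_algHom_apply e.toAlgHom (AdjoinRoot.root f) f
    simpa [hf] using h2
  · set γ := e (AdjoinRoot.root f) with hγ
    have hr : aeval γ f = 0 := by
      rw [hγ]
      simpa [AdjoinRoot.aeval_eq, AdjoinRoot.mk_self]
        using aeval_algHom_apply e.toAlgHom (AdjoinRoot.root f) f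
    have hint : IsIntegral (ZMod 5) γ := ⟨f, hmonic, hr⟩
    have hmin : minpoly (ZMod 5) γ = f :=
      (minpoly.eq_of_irreducible_of_monic hirr hr hmonic).symm
    have htop : IntermediateField.adjoin (ZMod 5) {γ} = ⊤ := by
      rw [Field.primitive_element_iff_minpoly_natDegree_eq, hmin, hdeg,
        GaloisField.finrank 5 (by norm_num)]
    rw [← IntermediateField.adjoin_simple_toSubalgebra_of_isAlgebraic hint.isAlgebraic, htop,
      IntermediateField.top_toSubalgebra]

/-- `q = 5` is not in `L₃`: there exist a nonzero `β ∈ F_{125}` and a generator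
`γ` of `F_{125}` over `F₅` such that `β(γ + a)` is not a primitive element
(a generator of the cyclic group `F_{125}ˣ`, of order 124) for any `a ∈ F₅`. -/
theorem five_not_in_L3 :
    ∃ β γ : GaloisField 5 3, β ≠ 0 ∧
      Algebra.adjoin (ZMod 5) {γ} = ⊤ ∧
      ∀ a : ZMod 5,
        orderOf (β * (γ + algebraMap (ZMod 5) (GaloisField 5 3) a)) ≠ 124 := by
  obtain ⟨γ, h, htop⟩ := aux_exists_root
  have h5 : (5 : GaloisField 5 3) = 0 := by
    have := CharP.cast_eq_zero (GaloisField 5 3) 5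
    exact_mod_cast this
  refine ⟨γ ^ 2 + γ + 2, γ, ?_, htop, ?_⟩
  · intro hb
    have h3 : (3 : GaloisField 5 3) = 0 := by linear_combination h - (γ - 1) * hb
    have h1 : (1 : GaloisField 5 3) = 0 := by linear_combination h3 - h5 + 2 * h3 - h3
    exact one_ne_zero h1
  · intro a
    have ha : a = 0 ∨ a = 1 ∨ a = 2 ∨ a = 3 ∨ a = 4 := by
      have : ∀ b : ZMod 5, b = 0 ∨ b = 1 ∨ b = 2 ∨ b = 3 ∨ b = 4 := by decide
      exact this a
    rcases ha with rfl | rfl | rfl | rfl | rfl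
    · exact aux_not124 _ (2 + 4 * γ) (by
        rw [map_zero]
        linear_combination -h + (1 + 3 * γ + 3 * γ ^ 2) * h5)
    · exact aux_not124 _ (γ + 2 * γ ^ 2) (by
        rw [map_one]
        linear_combination (3 + 4 * γ) * h - (1 + 2 * γ + γ ^ 2) * h5)
    · exact aux_not124 _ (1 + γ + 4 * γ ^ 2) (by
        rw [map_ofNat]
        linear_combination (7 + 16 * γ) * h - (2 + 5 * γ + 2 * γ ^ 2) * h5)
    · exact aux_not124 _ (γ ^ 2) (by
        rw [map_ofNat]
        linear_combination (-1 + γ) * h - (1 + γ + γ ^ 2) * h5)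
    · intro hord
      have hz : (γ ^ 2 + γ + 2) * (γ + algebraMap (ZMod 5) (GaloisField 5 3) 4) = 2 := by
        rw [map_ofNat]
        linear_combination h + (1 + γ + γ ^ 2) * h5
      have h4 : ((γ ^ 2 + γ + 2) * (γ + algebraMap (ZMod 5) (GaloisField 5 3) 4)) ^ 4 = 1 := by
        rw [hz]
        linear_combination 3 * h5
      have := orderOf_dvd_of_pow_eq_one h4
      rw [hord] at this
      omega
end
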